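/- Let ω be a d-exact differential form on a compact hyperkähler manifold M that is d_C-closed for every complex structure C compatible with the hyperkähler structure. Then there exists a form τ of degree deg(ω) − 4 with ω = d d_I d_J d_K τ; explicitly τ = d* d_I* d_J* d_K* G⁴ ω where G is the Green operator of Δ. -/

import Mathlib

/-- The quaternionic family of differentials `d_x = x⁰ d + x¹ d_I + x² d_J + x³ d_K`. -/
def dqOp {Ω : Type*} [AddCommGroup Ω] [Module ℝ Ω]
    (d dI dJ dK : Module.End ℝ Ω) (x : Quaternion ℝ) : Module.End ℝ Ω :=
  x.re • d + x.imI • dI + x.imJ • dJ + x.imK • dK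

/-- Let `ω` be a `d`-exact form of degree `k` on a compact hyperkähler
manifold which is `d_C`-closed for every compatible complex structure
`C = aI + bJ + cK`, `a² + b² + c² = 1`.  Then there is a form `τ` of degree `k - 4`
with `ω = d d_I d_J d_K τ`; explicitly `τ = d* d_I* d_J* d_K* G⁴ ω`, where `G` is the
Green operator of `Δ = dd* + d*d`.  The compact hyperkähler geometry is encoded by:
the grading operator `N` (with `d`'s raising and adjoints lowering the degree, and
`[N, G] = 0`), the quaternionic relations `{d_x, d_y} = 0`,
`{d_x, d_y*} = Re(x̄y) Δ`, the commutation of `G` with all the differentials and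
their adjoints, and the Hodge-theoretic fact that an exact `d_C`-closed form `η`
satisfies `η = d_C d_C* G η`. -/
theorem hyperkahler_fourth_order_transgression
    {Ω : Type*} [AddCommGroup Ω] [Module ℝ Ω]
    (N d dI dJ dK dstar dIstar dJstar dKstar G Δ : Module.End ℝ Ω)
    (hΔ : Δ = d * dstar + dstar * d)
    -- grading
    (hNd : N * d - d * N = d) (hNdI : N * dI - dI * N = dI)
    (hNdJ : N * dJ - dJ * N = dJ) (hNdK : N * dK - dK * N = dK)
    (hNds : N * dstar - dstar * N = -dstar)
    (hNdIs : N * dIstar - dIstar * N = -dIstar)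
    (hNdJs : N * dJstar - dJstar * N = -dJstar)
    (hNdKs : N * dKstar - dKstar * N = -dKstar)
    (hNG : N * G = G * N)
    -- quaternionic relations
    (hanti : ∀ x y : Quaternion ℝ,
      dqOp d dI dJ dK x * dqOp d dI dJ dK y
        + dqOp d dI dJ dK y * dqOp d dI dJ dK x = 0)
    (hadj : ∀ x y : Quaternion ℝ,
      dqOp d dI dJ dK x * dqOp dstar dIstar dJstar dKstar y
        + dqOp dstar dIstar dJstar dKstar y * dqOp d dI dJ dK x
        = (star x * y).re • Δ)
    -- the Green operator commutes with all differentials and adjoints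
    (hGcomm : ∀ x : Quaternion ℝ,
      G * dqOp d dI dJ dK x = dqOp d dI dJ dK x * G ∧
      G * dqOp dstar dIstar dJstar dKstar x = dqOp dstar dIstar dJstar dKstar x * G)
    -- Hodge theory: an exact `d_C`-closed form is `d_C d_C* G` of itself
    (hHodge : ∀ η : Ω, (∃ α, η = d α) →
      (d η = 0 → η = d (dstar (G η))) ∧
      (dI η = 0 → η = dI (dIstar (G η))) ∧
      (dJ η = 0 → η = dJ (dJstar (G η))) ∧
      (dK η = 0 → η = dK (dKstar (G η))))
    (ω : Ω) (k : ℕ) (hk : 4 ≤ k)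
    (hdeg : N ω = (k : ℝ) • ω)
    (hexact : ∃ α, ω = d α)
    (hclosed : ∀ a b c : ℝ, a ^ 2 + b ^ 2 + c ^ 2 = 1 →
      (a • dI + b • dJ + c • dK) ω = 0) :
    ∃ τ : Ω, N τ = ((k : ℝ) - 4) • τ ∧ ω = d (dI (dJ (dK τ))) ∧
      τ = dstar (dIstar (dJstar (dKstar (G (G (G (G ω))))))) := by
  obtain ⟨α, hα⟩ := hexact
  -- pointwise anticommutation helper
  have acomm : ∀ {A B : Module.End ℝ Ω}, A * B + B * A = 0 →
      ∀ v : Ω, A (B v) = -(B (A v)) := by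
    intro A B h v
    have h' := LinearMap.congr_fun h v
    simp only [LinearMap.add_apply, Module.End.mul_apply, LinearMap.zero_apply] at h'
    exact eq_neg_of_add_eq_zero_left h'
  -- closedness in each direction
  have hI : dI ω = 0 := by simpa using hclosed 1 0 0 (by norm_num)
  have hJ : dJ ω = 0 := by simpa using hclosed 0 1 0 (by norm_num)
  have hK : dK ω = 0 := by simpa using hclosed 0 0 1 (by norm_num)
  -- d² = 0, hence dω = 0
  have hdd : d * d = 0 := by
    have h := hanti 1 1
    rw [show dqOp d dI dJ dK 1 = d by simp [dqOp, Quaternion.re_one, Quaternion.imI_one, Quaternion.imJ_one, Quaternion.imK_one]] at h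
    have h2 : (2 : ℝ) • (d * d) = 0 := by rw [two_smul]; exact h
    have := smul_eq_zero.mp h2
    simpa using this
  have hdω : d ω = 0 := by
    rw [hα]
    have := LinearMap.congr_fun hdd α
    simpa using this
  -- cross anticommutation relations from hadj
  have hcross : ∀ (x y : Quaternion ℝ), (star x * y).re = 0 →
      dqOp d dI dJ dK x * dqOp dstar dIstar dJstar dKstar y
        + dqOp dstar dIstar dJstar dKstar y * dqOp d dI dJ dK x = 0 := by
    intro x y h; rw [hadj, h, zero_smul]
  have qI : dqOp d dI dJ dK ⟨0,1,0,0⟩ = dI := by simp [dqOp]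
  have qJ : dqOp d dI dJ dK ⟨0,0,1,0⟩ = dJ := by simp [dqOp]
  have qK : dqOp d dI dJ dK ⟨0,0,0,1⟩ = dK := by simp [dqOp]
  have qs : dqOp dstar dIstar dJstar dKstar 1 = dstar := by simp [dqOp, Quaternion.re_one, Quaternion.imI_one, Quaternion.imJ_one, Quaternion.imK_one]
  have qIs : dqOp dstar dIstar dJstar dKstar ⟨0,1,0,0⟩ = dIstar := by simp [dqOp]
  have qJs : dqOp dstar dIstar dJstar dKstar ⟨0,0,1,0⟩ = dJstar := by simp [dqOp]
  -- the six needed pointwise anticommutators (starred moves right past unstarred)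
  have asI : ∀ v, dstar (dI v) = -(dI (dstar v)) := by
    have h := hcross ⟨0,1,0,0⟩ 1 (by erw [Quaternion.re_mul, Quaternion.re_star, Quaternion.imI_star, Quaternion.imJ_star, Quaternion.imK_star]; simp [Quaternion.re_one, Quaternion.imI_one, Quaternion.imJ_one, Quaternion.imK_one])
    rw [qI, qs] at h
    exact acomm (by rw [add_comm] at h; exact h)
  have asJ : ∀ v, dstar (dJ v) = -(dJ (dstar v)) := by
    have h := hcross ⟨0,0,1,0⟩ 1 (by erw [Quaternion.re_mul, Quaternion.re_star, Quaternion.imI_star, Quaternion.imJ_star, Quaternion.imK_star]; simp [Quaternion.re_one, Quaternion.imI_one, Quaternion.imJ_one, Quaternion.imK_one])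
    rw [qJ, qs] at h
    exact acomm (by rw [add_comm] at h; exact h)
  have asK : ∀ v, dstar (dK v) = -(dK (dstar v)) := by
    have h := hcross ⟨0,0,0,1⟩ 1 (by erw [Quaternion.re_mul, Quaternion.re_star, Quaternion.imI_star, Quaternion.imJ_star, Quaternion.imK_star]; simp [Quaternion.re_one, Quaternion.imI_one, Quaternion.imJ_one, Quaternion.imK_one])
    rw [qK, qs] at h
    exact acomm (by rw [add_comm] at h; exact h)
  have aIsJ : ∀ v, dIstar (dJ v) = -(dJ (dIstar v)) := by
    have h := hcross ⟨0,0,1,0⟩ ⟨0,1,0,0⟩ (by erw [Quaternion.re_mul, Quaternion.re_star, Quaternion.imI_star, Quaternion.imJ_star, Quaternion.imK_star]; simp [Quaternion.re_one, Quaternion.imI_one, Quaternion.imJ_one, Quaternion.imK_one])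
    rw [qJ, qIs] at h
    exact acomm (by rw [add_comm] at h; exact h)
  have aIsK : ∀ v, dIstar (dK v) = -(dK (dIstar v)) := by
    have h := hcross ⟨0,0,0,1⟩ ⟨0,1,0,0⟩ (by erw [Quaternion.re_mul, Quaternion.re_star, Quaternion.imI_star, Quaternion.imJ_star, Quaternion.imK_star]; simp [Quaternion.re_one, Quaternion.imI_one, Quaternion.imJ_one, Quaternion.imK_one])
    rw [qK, qIs] at h
    exact acomm (by rw [add_comm] at h; exact h)
  have aJsK : ∀ v, dJstar (dK v) = -(dK (dJstar v)) := by
    have h := hcross ⟨0,0,0,1⟩ ⟨0,0,1,0⟩ (by erw [Quaternion.re_mul, Quaternion.re_star, Quaternion.imI_star, Quaternion.imJ_star, Quaternion.imK_star]; simp [Quaternion.re_one, Quaternion.imI_one, Quaternion.imJ_one, Quaternion.imK_one])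
    rw [qK, qJs] at h
    exact acomm (by rw [add_comm] at h; exact h)
  -- Green operator commutation, pointwise, pushing G inward
  have gcomm : ∀ (A : Module.End ℝ Ω), G * A = A * G → ∀ v, G (A v) = A (G v) :=
    fun A h v => LinearMap.congr_fun h v
  have gd : ∀ v, G (d v) = d (G v) := by
    have h := (hGcomm 1).1; rw [show dqOp d dI dJ dK 1 = d by simp [dqOp, Quaternion.re_one, Quaternion.imI_one, Quaternion.imJ_one, Quaternion.imK_one]] at h
    exact gcomm d h
  have gI : ∀ v, G (dI v) = dI (G v) := by
    have h := (hGcomm ⟨0,1,0,0⟩).1; rw [qI] at h; exact gcomm dI h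
  have gJ : ∀ v, G (dJ v) = dJ (G v) := by
    have h := (hGcomm ⟨0,0,1,0⟩).1; rw [qJ] at h; exact gcomm dJ h
  have gK : ∀ v, G (dK v) = dK (G v) := by
    have h := (hGcomm ⟨0,0,0,1⟩).1; rw [qK] at h; exact gcomm dK h
  have gs : ∀ v, G (dstar v) = dstar (G v) := by
    have h := (hGcomm 1).2; rw [qs] at h; exact gcomm dstar h
  have gIs : ∀ v, G (dIstar v) = dIstar (G v) := by
    have h := (hGcomm ⟨0,1,0,0⟩).2; rw [qIs] at h; exact gcomm dIstar h
  have gJs : ∀ v, G (dJstar v) = dJstar (G v) := by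
    have h := (hGcomm ⟨0,0,1,0⟩).2; rw [qJs] at h; exact gcomm dJstar h
  have gKs : ∀ v, G (dKstar v) = dKstar (G v) := by
    have h := (hGcomm ⟨0,0,0,1⟩).2
    rw [show dqOp dstar dIstar dJstar dKstar ⟨0,0,0,1⟩ = dKstar by simp [dqOp]] at h
    exact gcomm dKstar h
  -- Hodge identities
  obtain ⟨H1, H2, H3, H4⟩ := hHodge ω ⟨α, hα⟩
  have h1 := H1 hdω
  have h2 := H2 hI
  have h3 := H3 hJ
  have h4 := H4 hK
  -- the main identity
  have main : ω = d (dI (dJ (dK (dstar (dIstar (dJstar (dKstar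
      (G (G (G (G ω))))))))))) := by
    conv_lhs => rw [h1, h2, h3, h4]
    simp only [gd, gI, gJ, gK, gs, gIs, gJs, gKs, asI, asJ, asK, aIsJ, aIsK, aJsK,
      map_neg, neg_neg]
  -- degree bookkeeping
  have hg : ∀ v, N (G v) = G (N v) := fun v => LinearMap.congr_fun hNG v
  have degstep : ∀ (s : Module.End ℝ Ω), N * s - s * N = -s →
      ∀ (c : ℝ) (v : Ω), N v = c • v → N (s v) = (c - 1) • s v := by
    intro s hs c v hv
    have h' := LinearMap.congr_fun hs v
    simp only [LinearMap.sub_apply, Module.End.mul_apply, LinearMap.neg_apply] at h'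
    have : N (s v) = s (N v) - s v := by
      have := sub_eq_iff_eq_add.mp h'
      rw [this]; abel
    rw [this, hv, map_smul, sub_smul, one_smul]
  have gdeg : N (G (G (G (G ω)))) = (k : ℝ) • G (G (G (G ω))) := by
    simp only [hg, hdeg, map_smul]
  have dK4 : N (dKstar (G (G (G (G ω))))) =
      ((k : ℝ) - 1) • dKstar (G (G (G (G ω)))) := degstep _ hNdKs _ _ gdeg
  have dJ4 := degstep _ hNdJs _ _ dK4
  have dI4 := degstep _ hNdIs _ _ dJ4
  have ds4 := degstep _ hNds _ _ dI4
  refine ⟨dstar (dIstar (dJstar (dKstar (G (G (G (G ω))))))), ?_, main, rfl⟩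
  rw [ds4, show ((k : ℝ) - 1 - 1 - 1 - 1) = (k : ℝ) - 4 by ring]
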